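/- Let a₁,a₂,b₁,b₂,c₁,c₂,μ₁,μ₂ be positive constants and define f₁(u₁,u₂) = u₁(-a₁ + b₁u₁ - c₁u₂), f₂(u₁,u₂) = u₂(-a₂ - b₂u₁ + c₂u₂). Set ψ₁ = min{μ₁b₁, μ₂c₂}, ψ₂ = (μ₁c₁ + μ₂b₂)/2, c = max{μ₁a₁, μ₂a₂}, and assume ψ₁ > ψ₂ > 0. Then with ψ = (ψ₁ - ψ₂)/2, for all u₁ ≥ 0, u₂ ≥ 0: μ₁f₁(u₁,u₂) + μ₂f₂(u₁,u₂) ≥ ψ(u₁+u₂)² - c(u₁+u₂). -/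
import Mathlib


theorem stmt_1 (a₁ a₂ b₁ b₂ c₁ c₂ μ₁ μ₂ : ℝ)
    (ha₁ : 0 < a₁) (ha₂ : 0 < a₂) (hb₁ : 0 < b₁) (hb₂ : 0 < b₂)
    (hc₁ : 0 < c₁) (hc₂ : 0 < c₂) (hμ₁ : 0 < μ₁) (hμ₂ : 0 < μ₂)
    (f₁ f₂ : ℝ → ℝ → ℝ)
    (hf₁ : ∀ u₁ u₂, f₁ u₁ u₂ = u₁ * (-a₁ + b₁ * u₁ - c₁ * u₂))
    (hf₂ : ∀ u₁ u₂, f₂ u₁ u₂ = u₂ * (-a₂ - b₂ * u₁ + c₂ * u₂))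
    (ψ₁ ψ₂ c ψ : ℝ)
    (hψ₁ : ψ₁ = min (μ₁ * b₁) (μ₂ * c₂))
    (hψ₂ : ψ₂ = (μ₁ * c₁ + μ₂ * b₂) / 2)
    (hc : c = max (μ₁ * a₁) (μ₂ * a₂))
    (hord : ψ₁ > ψ₂) (hpos : ψ₂ > 0)
    (hψ : ψ = (ψ₁ - ψ₂) / 2) :
    ∀ u₁ u₂ : ℝ, 0 ≤ u₁ → 0 ≤ u₂ →
      μ₁ * f₁ u₁ u₂ + μ₂ * f₂ u₁ u₂ ≥ ψ * (u₁ + u₂) ^ 2 - c * (u₁ + u₂) := by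
  intro u₁ u₂ h1 h2
  have hm1 : ψ₁ ≤ μ₁ * b₁ := hψ₁ ▸ min_le_left _ _
  have hm2 : ψ₁ ≤ μ₂ * c₂ := hψ₁ ▸ min_le_right _ _
  have hM1 : μ₁ * a₁ ≤ c := hc ▸ le_max_left _ _
  have hM2 : μ₂ * a₂ ≤ c := hc ▸ le_max_right _ _
  rw [hf₁, hf₂]
  nlinarith [sq_nonneg (u₁ - u₂), sq_nonneg (u₁ + u₂), mul_nonneg h1 h2, sq_nonneg u₁, sq_nonneg u₂, mul_nonneg (mul_nonneg h1 h2) hpos.le]
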